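/- If in a single-parameter mechanism the allocation function x is not monotone nondecreasing, i.e., there exist z₁ < z₂ with x(z₁) > x(z₂), then there is no payment rule p making the mechanism truthful and individually rational for simple value maximizers: any individually rational payment rule admits a type with a profitable deviation. -/

import Mathlib

open scoped NNReal

/-- if the allocation rule `x` of a single-parameter mechanism is
not monotone nondecreasing (there are `z₁ < z₂` with `x z₁ > x z₂`), then no
individually rational payment rule makes the mechanism truthful for simple
value maximizers: for every payment rule `p` satisfying individual rationality
under truthful bidding (`p t ≤ t * x t`), some type `t` has a profitable
deviation `b` — either a strictly larger allocation at an individually rational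
payment, or the same allocation at a strictly smaller payment. -/
theorem singleParam_nonmonotone_not_truthful
    (x : ℝ≥0 → ℝ≥0) (z₁ z₂ : ℝ≥0) (hz : z₁ < z₂) (hx : x z₂ < x z₁) :
    ∀ p : ℝ≥0 → ℝ≥0, (∀ t, p t ≤ t * x t) →
      ∃ t b : ℝ≥0,
        (x b > x t ∧ p b ≤ t * x b) ∨ (x b = x t ∧ p b < p t) := by
  intro p hIR
  exact ⟨z₂, z₁, Or.inl ⟨hx, (hIR z₁).trans
    (mul_le_mul_of_nonneg_right hz.le zero_le)⟩⟩
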